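/- Let Y be a real normed space and let A ⊆ Y be bounded. If A is countably precompact for the weak topology (every sequence in A has a weak cluster point in Y), then A is precompact for the weak topology, i.e., the weak closure of A in Y is weakly compact. -/

import Mathlib

open Filter Topology
open NormedSpace


theorem halfNorming {X : Type*} [NormedAddCommGroup X] [NormedSpace ℝ X]
    (S : Finset (StrongDual ℝ X)) :
    ∃ F : Finset X, (∀ f ∈ F, ‖f‖ ≤ 1) ∧
      ∀ e ∈ Submodule.span ℝ (S : Set (StrongDual ℝ X)), ∀ c : ℝ, 0 ≤ c →
        (∀ f ∈ F, |e f| ≤ c) → ‖e‖ ≤ 2 * c := by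
  classical
  set E := Submodule.span ℝ (S : Set (StrongDual ℝ X)) with hE
  haveI : FiniteDimensional ℝ E := FiniteDimensional.span_of_finite ℝ S.finite_toSet
  have key : ∀ e : E, ‖e‖ = 1 → ∃ f : X, ‖f‖ ≤ 1 ∧ 3/4 < |(e : StrongDual ℝ X) f| := by
    intro e he
    have h34 : (3/4 : ℝ) < ‖(e : StrongDual ℝ X)‖ := by
      rw [show ‖(e : StrongDual ℝ X)‖ = ‖e‖ from rfl, he]; norm_num
    obtain ⟨x, hx1, hx2⟩ := ContinuousLinearMap.exists_lt_apply_of_lt_opNorm _ h34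
    exact ⟨x, hx1.le, by rwa [Real.norm_eq_abs] at hx2⟩
  set Sph : Set E := Metric.sphere (0 : E) 1 with hSph
  have hSphc : IsCompact Sph := isCompact_sphere 0 1
  have hmem : ∀ e : Sph, ‖(e : E)‖ = 1 := fun e => (mem_sphere_zero_iff_norm (E := E)).1 e.2
  choose f hf1 hf2 using fun e : Sph => key e.1 (hmem e)
  obtain ⟨t, ht⟩ := hSphc.elim_finite_subcover (fun e : Sph => Metric.ball (e : E) (1/4))
    (fun _ => Metric.isOpen_ball)
    (fun p hp => Set.mem_iUnion.2 ⟨⟨p, hp⟩, Metric.mem_ball_self (by norm_num)⟩)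
  refine ⟨t.image f, ?_, ?_⟩
  · intro g hg
    obtain ⟨i, _, rfl⟩ := Finset.mem_image.1 hg
    exact hf1 i
  · intro e he c hc0 hFc
    rcases eq_or_ne e 0 with rfl | hne
    · simpa using by positivity
    · set ee : E := ⟨e, he⟩ with hee
      have hnee : ‖ee‖ = ‖e‖ := rfl
      have hepos : (0:ℝ) < ‖e‖ := norm_pos_iff.2 hne
      set u : E := ‖e‖⁻¹ • ee with hu
      have hucoe : (u : StrongDual ℝ X) = ‖e‖⁻¹ • e := rfl
      have hun : ‖u‖ = 1 := by
        show ‖(u : StrongDual ℝ X)‖ = 1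
        rw [hucoe, norm_smul, norm_inv, norm_norm, inv_mul_cancel₀ hepos.ne']
      have huS : u ∈ Sph := by rw [hSph]; exact (mem_sphere_zero_iff_norm (E := E)).2 hun
      obtain ⟨i, hi⟩ := Set.mem_iUnion₂.1 (ht huS)
      obtain ⟨hit, hiu⟩ := hi
      have hdist : ‖(u : StrongDual ℝ X) - (i : StrongDual ℝ X)‖ < 1/4 := by
        have : dist u (i : Sph) < 1/4 := by exact Metric.mem_ball.1 hiu
        have this := lt_of_eq_of_lt (dist_eq_norm (E := E) u (i : E)).symm this
        exact this
      have h1 : |((u : StrongDual ℝ X) - (i : StrongDual ℝ X)) (f i)| < 1/4 := by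
        calc |((u : StrongDual ℝ X) - (i : StrongDual ℝ X)) (f i)|
            ≤ ‖(u : StrongDual ℝ X) - (i : StrongDual ℝ X)‖ * ‖f i‖ := by
              rw [← Real.norm_eq_abs]; exact ContinuousLinearMap.le_opNorm _ _
          _ ≤ ‖(u : StrongDual ℝ X) - (i : StrongDual ℝ X)‖ * 1 := by
              exact mul_le_mul_of_nonneg_left (hf1 i) (norm_nonneg _)
          _ < 1/4 := by rw [mul_one]; exact hdist
      have h2 : 1/2 < |(u : StrongDual ℝ X) (f i)| := by
        have h36 := hf2 i
        have hsum : (i : StrongDual ℝ X) (f i)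
            = (u : StrongDual ℝ X) (f i) - ((u : StrongDual ℝ X) - (i : StrongDual ℝ X)) (f i) := by simp
        have habs : |(i : StrongDual ℝ X) (f i)|
            ≤ |(u : StrongDual ℝ X) (f i)| + |((u : StrongDual ℝ X) - (i : StrongDual ℝ X)) (f i)| := by
          rw [hsum]; exact abs_sub _ _
        linarith
      have hval : (u : StrongDual ℝ X) (f i) = ‖e‖⁻¹ * e (f i) := by
        rw [hu]; simp [hee]
      have h3 : 1/2 < ‖e‖⁻¹ * |e (f i)| := by
        rwa [hval, abs_mul, abs_inv, abs_norm] at h2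
      have h4 : |e (f i)| ≤ c := hFc _ (Finset.mem_image.2 ⟨i, hit, rfl⟩)
      have hc1 : ‖e‖ * (‖e‖⁻¹ * |e (f i)|) = |e (f i)| := by
        rw [← mul_assoc, mul_inv_cancel₀ hepos.ne', one_mul]
      have h6 : ‖e‖ * (1/2) < ‖e‖ * (‖e‖⁻¹ * |e (f i)|) := mul_lt_mul_of_pos_left h3 hepos
      rw [hc1] at h6
      linarith

/-- Whitley construction state. -/
noncomputable def wState {W Z Y' : Type*} [DecidableEq W] [DecidableEq Z] [Sub Z]
    (Φ : Finset Z → Finset W) (Ψ : Finset W → ℕ → Y') (T : Y' → Z) (z0 : Z) :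
    ℕ → Finset W × Finset Z
  | 0 => (Φ {z0}, {z0})
  | n+1 =>
      let p := wState Φ Ψ T z0 n
      let V : Finset Z := insert (z0 - T (Ψ p.1 n)) p.2
      (p.1 ∪ Φ V, V)

section props
variable {W Z Y' : Type*} [DecidableEq W] [DecidableEq Z] [Sub Z]
    (Φ : Finset Z → Finset W) (Ψ : Finset W → ℕ → Y') (T : Y' → Z) (z0 : Z)

theorem wState_mono1 : ∀ n, (wState Φ Ψ T z0 n).1 ⊆ (wState Φ Ψ T z0 (n+1)).1 := by
  intro n
  show (wState Φ Ψ T z0 n).1 ⊆ (wState Φ Ψ T z0 n).1 ∪ _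
  exact Finset.subset_union_left

theorem wState_mono2 : ∀ n, (wState Φ Ψ T z0 n).2 ⊆ (wState Φ Ψ T z0 (n+1)).2 := by
  intro n
  show (wState Φ Ψ T z0 n).2 ⊆ insert _ (wState Φ Ψ T z0 n).2
  exact Finset.subset_insert _ _

theorem wState_mono1' {m n : ℕ} (h : m ≤ n) :
    (wState Φ Ψ T z0 m).1 ⊆ (wState Φ Ψ T z0 n).1 := by
  induction n with
  | zero => simpa [Nat.le_zero.1 h] using Finset.Subset.refl _
  | succ n ih =>
      rcases Nat.lt_or_ge m (n+1) with h' | h'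
      · exact (ih (Nat.lt_succ_iff.1 h')).trans (wState_mono1 Φ Ψ T z0 n)
      · have : m = n+1 := le_antisymm h h'
        subst this; exact Finset.Subset.refl _

theorem wState_mono2' {m n : ℕ} (h : m ≤ n) :
    (wState Φ Ψ T z0 m).2 ⊆ (wState Φ Ψ T z0 n).2 := by
  induction n with
  | zero => simpa [Nat.le_zero.1 h] using Finset.Subset.refl _
  | succ n ih =>
      rcases Nat.lt_or_ge m (n+1) with h' | h'
      · exact (ih (Nat.lt_succ_iff.1 h')).trans (wState_mono2 Φ Ψ T z0 n)
      · have : m = n+1 := le_antisymm h h'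
        subst this; exact Finset.Subset.refl _

theorem wState_phi_subset : ∀ n, Φ (wState Φ Ψ T z0 n).2 ⊆ (wState Φ Ψ T z0 n).1 := by
  intro n
  cases n with
  | zero => exact Finset.Subset.refl _
  | succ n => exact Finset.subset_union_right

theorem wState_z0_mem : ∀ n, z0 ∈ (wState Φ Ψ T z0 n).2 := by
  intro n
  induction n with
  | zero => exact Finset.mem_singleton_self _
  | succ n ih => exact Finset.mem_insert_of_mem ih

theorem wState_sub_mem (n : ℕ) :
    z0 - T (Ψ (wState Φ Ψ T z0 n).1 n) ∈ (wState Φ Ψ T z0 (n+1)).2 :=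
  Finset.mem_insert_self _ _

end props

-- embedding of weak space into weak dual of the dual
theorem weak_inducing (Y : Type*) [NormedAddCommGroup Y] [NormedSpace ℝ Y] :
    Topology.IsInducing (fun x : WeakSpace ℝ Y =>
      (StrongDual.toWeakDual (inclusionInDoubleDual ℝ Y ((toWeakSpace ℝ Y).symm x)) :
        WeakDual ℝ (StrongDual ℝ Y))) := by
  constructor
  have h1 : (instTopologicalSpaceWeakSpace ℝ Y : TopologicalSpace (WeakSpace ℝ Y))
      = TopologicalSpace.induced
          (fun (x : WeakSpace ℝ Y) (f : StrongDual ℝ Y) => f ((toWeakSpace ℝ Y).symm x))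
          Pi.topologicalSpace := rfl
  have h2 : (instTopologicalSpaceWeakDual ℝ (StrongDual ℝ Y) : TopologicalSpace (WeakDual ℝ (StrongDual ℝ Y)))
      = TopologicalSpace.induced
          (fun (z : WeakDual ℝ (StrongDual ℝ Y)) (d : StrongDual ℝ Y) => z d)
          Pi.topologicalSpace := rfl
  rw [h1, h2, induced_compose]
  rfl


set_option maxHeartbeats 2000000 in
/-- Eberlein–Šmulian, direction (iii) ⇒ (i): if a bounded subset `A` of a
normed space `Y` is countably precompact for the weak topology (every sequence
in `A` has a weak cluster point in `Y`), then the weak closure of `A` is weakly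
compact. -/
theorem weakly_countably_precompact_implies_weakly_precompact
    (Y : Type*) [NormedAddCommGroup Y] [NormedSpace ℝ Y] (A : Set Y)
    (hbdd : ∃ r : ℝ, ∀ a ∈ A, ‖a‖ ≤ r)
    (hcp : ∀ u : ℕ → Y, (∀ n, u n ∈ A) →
      ∃ y : Y, MapClusterPt (toWeakSpace ℝ Y y) atTop (fun n => toWeakSpace ℝ Y (u n))) :
    IsCompact (closure (toWeakSpace ℝ Y '' A)) := by
  classical
  obtain ⟨r, hr⟩ := hbdd
  set j : WeakSpace ℝ Y → WeakDual ℝ (StrongDual ℝ Y) := fun x =>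
    (StrongDual.toWeakDual (inclusionInDoubleDual ℝ Y ((toWeakSpace ℝ Y).symm x))) with hj
  have hind : Topology.IsInducing j := weak_inducing Y
  set K : Set (WeakDual ℝ (StrongDual ℝ Y)) := closure (j '' (toWeakSpace ℝ Y '' A)) with hK
  have hA' : j '' (toWeakSpace ℝ Y '' A) ⊆
      WeakDual.toStrongDual ⁻¹' Metric.closedBall 0 (max r 0) := by
    rintro _ ⟨_, ⟨a, haA, rfl⟩, rfl⟩
    simp only [Set.mem_preimage, Metric.mem_closedBall, dist_zero_right]
    have h1 : ‖inclusionInDoubleDual ℝ Y a‖ ≤ ‖a‖ := double_dual_bound ℝ Y a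
    have : ((toWeakSpace ℝ Y).symm (toWeakSpace ℝ Y a)) = a := (toWeakSpace ℝ Y).symm_apply_apply a
    rw [hj]
    simp only [this]
    exact le_trans (le_trans (le_of_eq (dist_zero_right (WeakDual.toStrongDual (StrongDual.toWeakDual (inclusionInDoubleDual ℝ Y a))))) h1) (le_max_of_le_left (hr a haA))
  have hball : IsCompact (WeakDual.toStrongDual ⁻¹' Metric.closedBall (0 : StrongDual ℝ (StrongDual ℝ Y)) (max r 0)) :=
    WeakDual.isCompact_closedBall (𝕜 := ℝ) 0 (max r 0)
  have hKc : IsCompact K := by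
    refine IsCompact.of_isClosed_subset hball isClosed_closure ?_
    exact closure_minimal hA' hball.isClosed
  have hrange : K ⊆ Set.range j := by
    intro x hx
    set z : StrongDual ℝ (StrongDual ℝ Y) := WeakDual.toStrongDual x with hzdef
    -- choice of approximating elements of A
    have hPsiEx : ∀ (G : Finset (StrongDual ℝ Y)) (n : ℕ),
        ∃ a, a ∈ A ∧ ∀ f ∈ G, |z f - f a| < 1/(n+1) := by
      intro G n
      have hpos : (0:ℝ) < 1/(n+1) := by positivity
      set U : Set (WeakDual ℝ (StrongDual ℝ Y)) := {w | ∀ f ∈ G, |w f - x f| < 1/(n+1)} with hU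
      have hUopen : IsOpen U := by
        have hUeq : U = ⋂ f ∈ G, (fun w : WeakDual ℝ (StrongDual ℝ Y) => w f) ⁻¹'
            (Metric.ball (x f) (1/(n+1))) := by
          ext w; simp [hU, Real.dist_eq]
        rw [hUeq]
        exact isOpen_biInter_finset
          (fun f _ => (Metric.isOpen_ball).preimage (WeakDual.eval_continuous f))
      have hxU : x ∈ U := by intro f hf; simpa using hpos
      obtain ⟨w, hwU, hwA⟩ := mem_closure_iff.1 hx U hUopen hxU
      obtain ⟨_, ⟨a, haA, rfl⟩, rfl⟩ := hwA
      refine ⟨a, haA, fun f hf => ?_⟩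
      have h1 := hwU f hf
      have h2 : (j (toWeakSpace ℝ Y a)) f = f a := by
        rw [hj]; simp
      rw [h2] at h1
      rw [abs_sub_comm]
      exact h1
    choose Psi hPsiA hPsi using hPsiEx
    choose Phi hPhi1 hPhi2 using
      fun V : Finset (StrongDual ℝ (StrongDual ℝ Y)) => halfNorming V
    set T : Y → StrongDual ℝ (StrongDual ℝ Y) :=
      fun v => inclusionInDoubleDual ℝ Y v with hT
    set s : ℕ → _ := wState Phi Psi T z with hs
    set a : ℕ → Y := fun n => Psi (s n).1 n with ha
    have haA : ∀ n, a n ∈ A := fun n => hPsiA _ n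
    obtain ⟨y, hy⟩ := hcp a haA
    -- frequent approximation of y by the sequence, functional by functional
    have hfreq : ∀ (f : StrongDual ℝ Y) (ε : ℝ), 0 < ε → ∀ N : ℕ,
        ∃ m, N ≤ m ∧ |f (a m) - f y| < ε := by
      intro f ε hε N
      have hcont : Continuous fun w : WeakSpace ℝ Y => f ((toWeakSpace ℝ Y).symm w) :=
        WeakBilin.eval_continuous _ f
      have hnb : {w : WeakSpace ℝ Y | |f ((toWeakSpace ℝ Y).symm w) - f y| < ε}
          ∈ 𝓝 (toWeakSpace ℝ Y y) := by
        have hopen : IsOpen {w : WeakSpace ℝ Y | |f ((toWeakSpace ℝ Y).symm w) - f y| < ε} := by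
          have heq : {w : WeakSpace ℝ Y | |f ((toWeakSpace ℝ Y).symm w) - f y| < ε}
              = (fun w : WeakSpace ℝ Y => f ((toWeakSpace ℝ Y).symm w)) ⁻¹'
                (Metric.ball (f y) ε) := by
            ext w; simp [Real.dist_eq]
          rw [heq]; exact Metric.isOpen_ball.preimage hcont
        refine hopen.mem_nhds ?_
        simp [hε]
      have hfr := (mapClusterPt_iff_frequently.1 hy) _ hnb
      obtain ⟨m, hm1, hm2⟩ := (hfr.and_eventually (eventually_ge_atTop N)).exists
      refine ⟨m, hm2, ?_⟩
      simpa using hm1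
    -- vanishing of z - T y on all chosen functionals
    have hvan : ∀ n, ∀ f ∈ (s n).1, z f - f y = 0 := by
      intro n f hf
      have hkey : ∀ ε : ℝ, 0 < ε → |z f - f y| ≤ 2*ε := by
        intro ε hε
        obtain ⟨M, hM⟩ := exists_nat_gt (1/ε)
        obtain ⟨m, hm1, hm2⟩ := hfreq f ε hε (max n M)
        have hfm : f ∈ (s m).1 :=
          wState_mono1' Phi Psi T z (le_trans (le_max_left _ _) hm1) hf
        have h1 := hPsi (s m).1 m f hfm
        have hMm : (M:ℝ) ≤ m := by exact_mod_cast le_trans (le_max_right _ _) hm1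
        have hsmall : 1/((m:ℝ)+1) ≤ ε := by
          have h2 : 1/ε < (m:ℝ)+1 := by linarith
          rw [div_le_iff₀ (by positivity)]
          rw [div_lt_iff₀ hε] at h2
          linarith
        have htri : |z f - f y| ≤ |z f - f (a m)| + |f (a m) - f y| := by
          have : z f - f y = (z f - f (a m)) + (f (a m) - f y) := by ring
          rw [this]; exact abs_add_le _ _
        have h1' : |z f - f (a m)| < ε := lt_of_lt_of_le h1 (by push_cast; linarith)
        linarith
      have h0 : |z f - f y| ≤ 0 := by
        by_contra h
        push_neg at h
        have := hkey (|z f - f y|/4) (by linarith)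
        linarith
      have := le_antisymm h0 (abs_nonneg _)
      exact abs_eq_zero.1 this
    -- the span of all chosen vectors
    set P : Submodule ℝ (StrongDual ℝ (StrongDual ℝ Y)) :=
      Submodule.span ℝ (⋃ n, ((s n).2 : Set _)) with hP
    have hzP : z ∈ P :=
      Submodule.subset_span (Set.mem_iUnion.2 ⟨0, wState_z0_mem Phi Psi T z 0⟩)
    have haP : ∀ n, T (a n) ∈ P := by
      intro n
      have h1 : z - T (a n) ∈ P :=
        Submodule.subset_span (Set.mem_iUnion.2 ⟨n+1, wState_sub_mem Phi Psi T z n⟩)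
      have h2 : z - (z - T (a n)) ∈ P := P.sub_mem (x := z) (y := z - T (a n)) hzP h1
      exact (congrArg (· ∈ P) (sub_sub_cancel z (T (a n)))).mp h2
    -- y lies in the norm closure of the span of the sequence
    have hyclosure : y ∈ closure ((Submodule.span ℝ (Set.range a) : Submodule ℝ Y) : Set Y) := by
      by_contra hnot
      have hconv : Convex ℝ (closure ((Submodule.span ℝ (Set.range a) : Submodule ℝ Y) : Set Y)) :=
        (Submodule.span ℝ (Set.range a)).convex.closure
      obtain ⟨f, u, hfu, huy⟩ := geometric_hahn_banach_closed_point hconv isClosed_closure hnot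
      have hf0 : ∀ b ∈ Submodule.span ℝ (Set.range a), f b = 0 := by
        intro b hb
        by_contra hfb
        have hsc := hfu (((u+1)/(f b)) • b)
          (subset_closure ((Submodule.span ℝ (Set.range a)).smul_mem ((u+1)/(f b)) hb))
        rw [map_smul, smul_eq_mul, div_mul_cancel₀ _ hfb] at hsc
        linarith
      have hu0 : 0 < u := by
        have := hfu 0 (subset_closure (Submodule.zero_mem _))
        simpa using this
      have hfy : 0 < f y := lt_trans hu0 huy
      obtain ⟨m, _, hm⟩ := hfreq f (f y) hfy 0
      rw [hf0 (a m) (Submodule.subset_span ⟨m, rfl⟩)] at hm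
      rw [abs_sub_comm, sub_zero, abs_of_pos hfy] at hm
      exact lt_irrefl _ hm
    -- hence T y is in the closure of P
    have hTy : T y ∈ closure (P : Set _) := by
      have hmaps : ∀ b ∈ Submodule.span ℝ (Set.range a), T b ∈ P := by
        intro b hb
        induction hb using Submodule.span_induction with
        | mem v hv =>
            obtain ⟨n, rfl⟩ := hv
            exact haP n
        | zero => simpa [hT] using P.zero_mem
        | add v w _ _ hv hw => simpa [hT, map_add] using P.add_mem hv hw
        | smul c v _ hv => simpa [hT, map_smul] using P.smul_mem c hv
      have hcont : Continuous T := (inclusionInDoubleDual ℝ Y).continuous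
      have h1 : T y ∈ T '' closure ((Submodule.span ℝ (Set.range a) : Submodule ℝ Y) : Set Y) :=
        ⟨y, hyclosure, rfl⟩
      have h2 := image_closure_subset_closure_image (f := T)
        (s := ((Submodule.span ℝ (Set.range a) : Submodule ℝ Y) : Set Y)) hcont
      have h3 : T '' ((Submodule.span ℝ (Set.range a) : Submodule ℝ Y) : Set Y) ⊆ (P : Set _) := by
        rintro _ ⟨b, hb, rfl⟩
        exact hmaps b hb
      exact (closure_mono h3) (h2 h1)
    have heP : z - T y ∈ closure (P : Set _) := by
      haveI : ContinuousAdd (StrongDual ℝ (StrongDual ℝ Y)) :=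
        (ContinuousLinearMap.topologicalAddGroup (σ := RingHom.id ℝ) (E := StrongDual ℝ Y) (F := ℝ)).toContinuousAdd
      have hz' : z ∈ P.topologicalClosure := Submodule.le_topologicalClosure P hzP
      have hy' : T y ∈ P.topologicalClosure := by
        rw [← SetLike.mem_coe, Submodule.topologicalClosure_coe]
        exact hTy
      have := P.topologicalClosure.sub_mem (x := z) (y := T y) hz' hy'
      rwa [← SetLike.mem_coe, Submodule.topologicalClosure_coe] at this
    -- half-norming estimate on P
    have hPnorm : ∀ e' ∈ P, ‖e'‖ ≤ 2 * ‖e' - (z - T y)‖ := by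
      intro e' he'
      have hdir : Directed (· ≤ ·) (fun n => Submodule.span ℝ (((s n).2 : Set
          (StrongDual ℝ (StrongDual ℝ Y))))) := by
        apply Monotone.directed_le
        intro i k hik
        exact Submodule.span_mono (Finset.coe_subset.2 (wState_mono2' Phi Psi T z hik))
      have hsup : e' ∈ ⨆ n, Submodule.span ℝ (((s n).2 : Set _)) := by
        rw [← Submodule.span_iUnion]
        exact he'
      obtain ⟨n, hn⟩ := (Submodule.mem_iSup_of_directed _ hdir).1 hsup
      refine hPhi2 (s n).2 e' hn ‖e' - (z - T y)‖ (norm_nonneg (e' - (z - T y))) ?_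
      intro f hfPhi
      have hf1' : ‖f‖ ≤ 1 := hPhi1 (s n).2 f hfPhi
      have hf2' : (z - T y) f = 0 := by
        have := hvan n f (wState_phi_subset Phi Psi T z n hfPhi)
        simpa [hT] using this
      have heval : |e' f| = |(e' - (z - T y)) f| := by
        have : (e' - (z - T y)) f = e' f - (z - T y) f := rfl
        rw [this, hf2', sub_zero]
      rw [heval, ← Real.norm_eq_abs]
      calc ‖(e' - (z - T y)) f‖ ≤ ‖e' - (z - T y)‖ * ‖f‖ :=
            ContinuousLinearMap.le_opNorm _ _
        _ ≤ ‖e' - (z - T y)‖ * 1 := mul_le_mul_of_nonneg_left hf1' (norm_nonneg (e' - (z - T y)))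
        _ = ‖e' - (z - T y)‖ := mul_one _
    -- conclude z = T y
    have hz0 : ‖z - T y‖ = 0 := by
      have hle : ∀ ε : ℝ, 0 < ε → ‖z - T y‖ ≤ 3*ε := by
        intro ε hε
        obtain ⟨e', he'P, he'd⟩ := (Metric.mem_closure_iff (α := StrongDual ℝ (StrongDual ℝ Y))).1 heP ε hε
        have h1 := hPnorm e' he'P
        have h2 : ‖z - T y - e'‖ < ε := by exact lt_of_eq_of_lt (dist_eq_norm (z - T y) e').symm he'd
        have h3 : ‖e' - (z - T y)‖ < ε := by exact lt_of_eq_of_lt (norm_sub_rev e' (z - T y)) h2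
        have h4 : ‖z - T y‖ ≤ ‖z - T y - e'‖ + ‖e'‖ := by
          have : z - T y = (z - T y - e') + e' := by abel
          nth_rewrite 1 [this]
          exact norm_add_le (z - T y - e') e'
        linarith
      by_contra h0
      have hpos : 0 < ‖z - T y‖ := lt_of_le_of_ne (norm_nonneg (z - T y)) (Ne.symm h0)
      have := hle (‖z - T y‖/6) (by linarith)
      linarith
    have hzy : z = T y := sub_eq_zero.1 (norm_eq_zero.1 hz0)
    refine ⟨toWeakSpace ℝ Y y, ?_⟩
    rw [hj]
    simp only [LinearEquiv.symm_apply_apply]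
    show StrongDual.toWeakDual (T y) = x
    rw [← hzy]
    rfl
  have hpre : IsCompact (j ⁻¹' K) := hind.isCompact_preimage' hKc hrange
  refine IsCompact.of_isClosed_subset hpre isClosed_closure ?_
  refine closure_minimal ?_ (isClosed_closure.preimage hind.continuous)
  intro w hw
  exact subset_closure ⟨w, hw, rfl⟩
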